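/- arXiv:1011.1576 — 11 statements merged into one kernel-verified Lean document; each statement's English description precedes it below -/
import Mathlib

section
/- Let p, y ∈ ℝ, n > 0, η > 0, and define s : ℝ → ℝ by s(h) = ((p − y)/n)·(1 − exp(−h·η·n)). Then s(0) = 0 and s is differentiable with s'(h) = η·((p − s(h)·n) − y) for all h, i.e., s solves the importance-invariant ODE for the squared loss. -/
/-- The closed-form importance-invariant update for the squared loss solves the
importance-invariant ODE `s'(h) = η((p − s(h)n) − y)`, `s(0) = 0`. -/
theorem stmt_4 (p y n η : ℝ) (hn : 0 < n) (hη : 0 < η)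
    (s : ℝ → ℝ)
    (hs : ∀ h : ℝ, s h = ((p - y) / n) * (1 - Real.exp (-(h * η * n)))) :
    s 0 = 0 ∧ ∀ h : ℝ, HasDerivAt s (η * ((p - s h * n) - y)) h := by
  have hsf : s = fun h : ℝ => ((p - y) / n) * (1 - Real.exp (-(h * η * n))) :=
    funext hs
  constructor
  · rw [hs]; simp
  · intro h
    have h1 : HasDerivAt (fun x : ℝ => -(x * η * n)) (-(η * n)) h := by
      have := (((hasDerivAt_id h).mul_const η).mul_const n).neg; simp only [id, one_mul] at this; exact this
    have h2 := (h1.exp.const_sub 1).const_mul ((p - y) / n)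
    rw [hsf]
    refine h2.congr_deriv ?_
    beta_reduce
    field_simp
    ring
end

section
/- Let p ∈ ℝ, y ∈ {−1, 1}, n > 0, η > 0, and define s : [0, ∞) → ℝ by s(h) = (p·y − log(h·η·n + exp(p·y)))/(n·y). Then s(0) = 0 and s is differentiable with s'(h) = −η·y·exp(−y·(p − s(h)·n)) for all h ≥ 0, i.e., s solves the importance-invariant ODE for the exponential loss. -/
/-- The closed-form importance-invariant update for the exponential loss solves the
importance-invariant ODE `s'(h) = −η·y·exp(−y(p − s(h)n))`, `s(0) = 0`, for `h ≥ 0`. -/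
theorem stmt_5 (p y n η : ℝ) (hy : y = -1 ∨ y = 1) (hn : 0 < n) (hη : 0 < η)
    (s : ℝ → ℝ)
    (hs : ∀ h : ℝ, s h = (p * y - Real.log (h * η * n + Real.exp (p * y))) / (n * y)) :
    s 0 = 0 ∧
      ∀ h : ℝ, 0 ≤ h → HasDerivAt s (-(η * y * Real.exp (-(y * (p - s h * n))))) h := by
  have hy2 : y * y = 1 := by rcases hy with h | h <;> simp [h]
  have hyne : y ≠ 0 := by rcases hy with h | h <;> simp [h]
  constructor
  · simp [hs, Real.log_exp]
  · intro h hh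
    have hA : 0 < h * η * n + Real.exp (p * y) := by
      have h1 : 0 ≤ h * η * n := by positivity
      have := Real.exp_pos (p * y)
      linarith
    have hA' : HasDerivAt (fun h : ℝ => h * η * n + Real.exp (p * y)) (η * n) h := by
      simpa using (((hasDerivAt_id h).mul_const η).mul_const n).add_const (Real.exp (p * y))
    have hlog : HasDerivAt (fun h : ℝ => Real.log (h * η * n + Real.exp (p * y)))
        (η * n / (h * η * n + Real.exp (p * y))) h := hA'.log hA.ne'
    have hd := ((hasDerivAt_const h (p * y)).sub hlog).div_const (n * y)
    have hfun : s = fun h => (p * y - Real.log (h * η * n + Real.exp (p * y))) / (n * y) :=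
      funext hs
    have hkey : -(y * (p - s h * n)) = -Real.log (h * η * n + Real.exp (p * y)) := by
      rw [hs h]
      field_simp
      ring
    have hval : -(η * y * Real.exp (-(y * (p - s h * n)))) =
        (0 - η * n / (h * η * n + Real.exp (p * y))) / (n * y) := by
      rw [hkey, Real.exp_neg, Real.exp_log hA]
      field_simp
      linear_combination (-(η * n)) * hy2
    rw [hval, hfun]
    exact hd
end

section
/- Let n > 0, η > 0, and p ∈ (0, 1). (i) Define s₀ : [0, ∞) → ℝ by s₀(h) = (p − 1 + √((p − 1)² + 2·h·η·n))/n. Then s₀(0) = 0 and s₀'(h) = η/(1 − (p − s₀(h)·n)) for all h ≥ 0. (ii) Define s₁ : [0, H) → ℝ by s₁(h) = (p − √(p² + 2·h·η·n))/n on any interval where p² + 2hηn > 0. Then s₁(0) = 0 and s₁'(h) = −η/(p − s₁(h)·n). -/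
lemma sqrt_deriv_aux (c η n : ℝ) (h : ℝ) (hpos : 0 < c + 2 * h * η * n) :
    HasDerivAt (fun x : ℝ => Real.sqrt (c + 2 * x * η * n))
      (η * n / Real.sqrt (c + 2 * h * η * n)) h := by
  have hfun : (fun x : ℝ => c + 2 * x * η * n) = (fun x : ℝ => c + 2 * η * n * x) := by
    funext x; ring
  have hinner : HasDerivAt (fun x : ℝ => c + 2 * x * η * n) (2 * η * n) h := by
    rw [hfun]
    simpa using ((hasDerivAt_id h).const_mul (2 * η * n)).const_add c
  have hne : c + 2 * h * η * n ≠ 0 := ne_of_gt hpos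
  have := (Real.hasDerivAt_sqrt hne).comp h hinner
  have hsq : Real.sqrt (c + 2 * h * η * n) > 0 := Real.sqrt_pos.mpr hpos
  refine this.congr_deriv ?_
  field_simp

/-- Closed-form importance-invariant updates for the logarithmic loss with `y ∈ {0,1}`:
they satisfy `s(0) = 0` and the importance-invariant ODE. -/
theorem stmt_6 (p n η : ℝ) (hn : 0 < n) (hη : 0 < η) (hp : p ∈ Set.Ioo (0 : ℝ) 1)
    (s₀ s₁ : ℝ → ℝ)
    (hs₀ : ∀ h : ℝ, s₀ h = (p - 1 + Real.sqrt ((p - 1) ^ 2 + 2 * h * η * n)) / n)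
    (hs₁ : ∀ h : ℝ, s₁ h = (p - Real.sqrt (p ^ 2 + 2 * h * η * n)) / n) :
    (s₀ 0 = 0 ∧
      ∀ h : ℝ, 0 ≤ h → HasDerivAt s₀ (η / (1 - (p - s₀ h * n))) h) ∧
    (s₁ 0 = 0 ∧
      ∀ h : ℝ, 0 ≤ h → 0 < p ^ 2 + 2 * h * η * n →
        HasDerivAt s₁ (-(η / (p - s₁ h * n))) h) := by
  obtain ⟨hp0, hp1⟩ := hp
  have hn' : n ≠ 0 := ne_of_gt hn
  constructor
  · constructor
    · rw [hs₀ 0]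
      rw [show (p - 1) ^ 2 + 2 * 0 * η * n = (1 - p) ^ 2 by ring,
        Real.sqrt_sq (by linarith)]
      field_simp
      ring
    · intro h hh
      have hpos : 0 < (p - 1) ^ 2 + 2 * h * η * n := by
        have h1 : p - 1 ≠ 0 := by linarith
        have h2 : 0 < (p - 1) ^ 2 := by positivity
        have h3 : 0 ≤ 2 * h * η * n := by positivity
        linarith
      have hsq := Real.sqrt_pos.mpr hpos
      have hd := ((sqrt_deriv_aux ((p - 1) ^ 2) η n h hpos).const_add (p - 1)).div_const n
      have heq : (fun x => (p - 1 + Real.sqrt ((p - 1) ^ 2 + 2 * x * η * n)) / n) = s₀ := by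
        ext x; rw [hs₀ x]
      rw [heq] at hd
      refine hd.congr_deriv ?_
      rw [hs₀ h, div_mul_cancel₀ _ hn',
        show 1 - (p - (p - 1 + Real.sqrt ((p - 1) ^ 2 + 2 * h * η * n)))
          = Real.sqrt ((p - 1) ^ 2 + 2 * h * η * n) by ring]
      field_simp
  · constructor
    · rw [hs₁ 0]
      rw [show p ^ 2 + 2 * 0 * η * n = p ^ 2 by ring, Real.sqrt_sq (le_of_lt hp0)]
      field_simp
      ring
    · intro h hh hpos
      have hsq := Real.sqrt_pos.mpr hpos
      have hd := (((sqrt_deriv_aux (p ^ 2) η n h hpos).const_sub p)).div_const n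
      have heq : (fun x => (p - Real.sqrt (p ^ 2 + 2 * x * η * n)) / n) = s₁ := by
        ext x; rw [hs₁ x]
      rw [heq] at hd
      refine hd.congr_deriv ?_
      rw [hs₁ h, div_mul_cancel₀ _ hn',
        show p - (p - Real.sqrt (p ^ 2 + 2 * h * η * n))
          = Real.sqrt (p ^ 2 + 2 * h * η * n) by ring]
      field_simp
end

section
/- Let n > 0, η > 0, and p ∈ (0, 1). (i) Define s₀ : [0, ∞) → ℝ by s₀(h) = (p − 1 + (1/4)·(12·h·η·n + 8·(1 − p)^{3/2})^{2/3})/n. Then s₀(0) = 0 and s₀'(h) = η/√(1 − (p − s₀(h)·n)) for all h ≥ 0. (ii) Define s₁ : [0, ∞) → ℝ by s₁(h) = (p − (1/4)·(12·h·η·n + 8·p^{3/2})^{2/3})/n. Then s₁(0) = 0 and s₁'(h) = −η/√(p − s₁(h)·n) for all h ≥ 0. -/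
lemma rpow_eight_aux (a : ℝ) (ha : 0 ≤ a) :
    (8 * a ^ ((3:ℝ)/2)) ^ ((2:ℝ)/3) = 4 * a := by
  have h8 : (8:ℝ) ^ ((2:ℝ)/3) = 4 := by
    rw [show (8:ℝ) = 2 ^ (3:ℝ) by
        rw [show (3:ℝ) = ((3:ℕ):ℝ) by norm_num, Real.rpow_natCast]; norm_num,
      ← Real.rpow_mul (by norm_num)]
    norm_num
  rw [Real.mul_rpow (by norm_num) (Real.rpow_nonneg ha _), ← Real.rpow_mul ha, h8]
  norm_num

lemma aux_deriv (a η n : ℝ) (ha : 0 < a) (hη : 0 < η) (hn : 0 < n) (h : ℝ) (hh : 0 ≤ h) :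
    HasDerivAt (fun t : ℝ => (1/4) * (12 * t * η * n + 8 * a ^ ((3:ℝ)/2)) ^ ((2:ℝ)/3))
      (η * n / Real.sqrt ((1/4) * (12 * h * η * n + 8 * a ^ ((3:ℝ)/2)) ^ ((2:ℝ)/3))) h := by
  set A := 12 * h * η * n + 8 * a ^ ((3:ℝ)/2) with hAdef
  have harp : 0 < a ^ ((3:ℝ)/2) := Real.rpow_pos_of_pos ha _
  have hA : 0 < A := by
    have h12 : 0 ≤ 12 * h * η * n := by positivity
    rw [hAdef]; linarith
  have h1 : HasDerivAt (fun t : ℝ => 12 * t * η * n + 8 * a ^ ((3:ℝ)/2)) (12 * η * n) h := by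
    simpa [mul_comm, mul_left_comm, mul_assoc] using
      (((hasDerivAt_id h).const_mul (12*η*n)).add_const (8 * a ^ ((3:ℝ)/2)))
  have h2 := (Real.hasDerivAt_rpow_const (p := (2:ℝ)/3) (Or.inl hA.ne')).comp h h1
  have h3 := h2.const_mul (1/4 : ℝ)
  refine h3.congr_deriv ?_
  have hs14 : Real.sqrt ((1/4) * A ^ ((2:ℝ)/3)) = (1/2) * A ^ ((1:ℝ)/3) := by
    rw [show (1/4 : ℝ) * A ^ ((2:ℝ)/3) = ((1/2) * A ^ ((1:ℝ)/3))^2 by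
      rw [mul_pow, ← Real.rpow_natCast (A ^ ((1:ℝ)/3)) 2, ← Real.rpow_mul hA.le]
      norm_num]
    exact Real.sqrt_sq (by positivity)
  rw [hs14, show (2:ℝ)/3 - 1 = -(1/3) by norm_num, Real.rpow_neg hA.le]
  have hA3 : (0:ℝ) < A ^ ((1:ℝ)/3) := Real.rpow_pos_of_pos hA _
  field_simp
  ring

/-- Closed-form importance-invariant updates for the Hellinger loss with `y ∈ {0,1}`:
they satisfy `s(0) = 0` and the importance-invariant ODE. Powers with real exponents
are `Real.rpow`. -/
theorem stmt_7 (p n η : ℝ) (hn : 0 < n) (hη : 0 < η) (hp : p ∈ Set.Ioo (0 : ℝ) 1)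
    (s₀ s₁ : ℝ → ℝ)
    (hs₀ : ∀ h : ℝ, s₀ h =
      (p - 1 + (1 / 4) * (12 * h * η * n + 8 * (1 - p) ^ ((3 : ℝ) / 2)) ^ ((2 : ℝ) / 3)) / n)
    (hs₁ : ∀ h : ℝ, s₁ h =
      (p - (1 / 4) * (12 * h * η * n + 8 * p ^ ((3 : ℝ) / 2)) ^ ((2 : ℝ) / 3)) / n) :
    (s₀ 0 = 0 ∧
      ∀ h : ℝ, 0 ≤ h → HasDerivAt s₀ (η / Real.sqrt (1 - (p - s₀ h * n))) h) ∧
    (s₁ 0 = 0 ∧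
      ∀ h : ℝ, 0 ≤ h → HasDerivAt s₁ (-(η / Real.sqrt (p - s₁ h * n))) h) := by
  obtain ⟨hp0, hp1⟩ := hp
  have h1p : 0 < 1 - p := by linarith
  set f₀ : ℝ → ℝ := fun t => (1/4) * (12 * t * η * n + 8 * (1 - p) ^ ((3:ℝ)/2)) ^ ((2:ℝ)/3)
    with hf₀
  set f₁ : ℝ → ℝ := fun t => (1/4) * (12 * t * η * n + 8 * p ^ ((3:ℝ)/2)) ^ ((2:ℝ)/3) with hf₁
  have hs₀' : ∀ h : ℝ, s₀ h = (p - 1 + f₀ h) / n := fun h => hs₀ h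
  have hs₁' : ∀ h : ℝ, s₁ h = (p - f₁ h) / n := fun h => hs₁ h
  have key₀ : ∀ h : ℝ, 1 - (p - s₀ h * n) = f₀ h := by
    intro h
    rw [hs₀', div_mul_cancel₀ _ hn.ne']
    ring
  have key₁ : ∀ h : ℝ, p - s₁ h * n = f₁ h := by
    intro h
    rw [hs₁', div_mul_cancel₀ _ hn.ne']
    ring
  refine ⟨⟨?_, ?_⟩, ?_, ?_⟩
  · rw [hs₀ 0]
    have : (12 * (0:ℝ) * η * n + 8 * (1 - p) ^ ((3:ℝ)/2)) = 8 * (1 - p) ^ ((3:ℝ)/2) := by ring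
    rw [this, rpow_eight_aux _ h1p.le]
    field_simp
    ring
  · intro h hh
    have hd := aux_deriv (1 - p) η n h1p hη hn h hh
    have hd2 : HasDerivAt (fun t => (p - 1 + f₀ t) / n)
        ((η * n / Real.sqrt (f₀ h)) / n) h := ((hd.const_add (p - 1)).div_const n)
    have heq : s₀ = fun t => (p - 1 + f₀ t) / n := funext hs₀'
    rw [key₀ h, heq]
    convert hd2 using 1
    field_simp
  · rw [hs₁ 0]
    have : (12 * (0:ℝ) * η * n + 8 * p ^ ((3:ℝ)/2)) = 8 * p ^ ((3:ℝ)/2) := by ring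
    rw [this, rpow_eight_aux _ hp0.le]
    field_simp
    ring
  · intro h hh
    have hd := aux_deriv p η n hp0 hη hn h hh
    have hd2 : HasDerivAt (fun t => (p - f₁ t) / n)
        (-(η * n / Real.sqrt (f₁ h)) / n) h := ((hd.const_sub p).div_const n)
    have heq : s₁ = fun t => (p - f₁ t) / n := funext hs₁'
    rw [key₁ h, heq]
    convert hd2 using 1
    field_simp
end

section
/- Let p ∈ ℝ, y ∈ {−1, 1}, n > 0, η > 0, and suppose y·p < 1. Set h* = (1 − y·p)/(η·n) and define s : [0, ∞) → ℝ by s(h) = −y·η·min(h, h*). Then: (i) s is continuous with s(0) = 0; (ii) for all 0 ≤ h < h*, y·(p − s(h)·n) < 1 and s is differentiable at h with s'(h) = −η·y; (iii) for all h > h*, y·(p − s(h)·n) = 1 and s is differentiable at h with s'(h) = 0. -/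
/-- The importance-invariant update for the hinge loss: `s(h) = −yη·min(h, h*)` is continuous,
vanishes at `0`, solves the ODE with slope `−ηy` before the hinge point `h*` and slope `0`
after it, where at the hinge point the margin equals exactly `1`. -/
theorem stmt_8 (p y n η : ℝ) (hy : y = -1 ∨ y = 1) (hn : 0 < n) (hη : 0 < η)
    (hyp : y * p < 1)
    (hstar : ℝ) (hhstar : hstar = (1 - y * p) / (η * n))
    (s : ℝ → ℝ) (hs : ∀ h : ℝ, s h = -y * η * min h hstar) :
    (Continuous s ∧ s 0 = 0) ∧
    (∀ h : ℝ, 0 ≤ h → h < hstar →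
      y * (p - s h * n) < 1 ∧ HasDerivAt s (-(η * y)) h) ∧
    (∀ h : ℝ, hstar < h →
      y * (p - s h * n) = 1 ∧ HasDerivAt s 0 h) := by
  have hy2 : y * y = 1 := by rcases hy with h | h <;> simp [h]
  have hηn : 0 < η * n := mul_pos hη hn
  have hstar_pos : 0 < hstar := by
    rw [hhstar]; exact div_pos (by linarith) hηn
  have hseq : s = fun h => -y * η * min h hstar := funext hs
  have hkey : η * hstar * n = 1 - y * p := by
    rw [hhstar]; field_simp
  refine ⟨⟨?_, ?_⟩, ?_, ?_⟩
  · rw [hseq]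
    exact (continuous_const.mul ((continuous_id.min continuous_const)))
  · rw [hs 0, min_eq_left hstar_pos.le]; ring
  · intro h h0 hlt
    constructor
    · rw [hs h, min_eq_left hlt.le]
      have : y * (p - -y * η * h * n) = y * p + η * h * n := by
        have : y * (y * (η * h * n)) = η * h * n := by
          rw [← mul_assoc, hy2, one_mul]
        nlinarith [this]
      rw [this]
      nlinarith
    · have : HasDerivAt (fun x => -y * η * x) (-(η * y)) h := by
        simpa [mul_comm] using (hasDerivAt_id h).const_mul (-y * η)
      refine this.congr_of_eventuallyEq ?_
      have hmem : {x : ℝ | x < hstar} ∈ nhds h := isOpen_Iio.mem_nhds hlt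
      filter_upwards [hmem] with x hx
      rw [hs x, min_eq_left (le_of_lt hx)]
  · intro h hgt
    constructor
    · rw [hs h, min_eq_right hgt.le]
      have : y * (p - -y * η * hstar * n) = y * p + y * y * (η * hstar * n) := by ring
      rw [this, hy2, hkey]; ring
    · have : HasDerivAt (fun _ : ℝ => -y * η * hstar) 0 h := hasDerivAt_const h _
      refine this.congr_of_eventuallyEq ?_
      have hmem : {x : ℝ | hstar < x} ∈ nhds h := isOpen_Ioi.mem_nhds hgt
      filter_upwards [hmem] with x hx
      rw [hs x, min_eq_right (le_of_lt hx)]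
end

section
/- Let f : ℝ → ℝ be Lipschitz continuous and let n ∈ ℝ. Suppose s : ℝ × [0, ∞) → ℝ is such that for every p ∈ ℝ, the function h ↦ s(p, h) is differentiable with s(p, 0) = 0 and ∂s/∂h (p, h) = f(p − n·s(p, h)) for all h ≥ 0. Then for all p ∈ ℝ and all a, b ≥ 0: s(p, a + b) = s(p, a) + s(p − n·s(p, a), b). -/
/-- Invariance property: an update with importance weight `a + b` equals an update with
importance `a` followed by an update with importance `b`, for solutions of
`∂s/∂h (p, h) = f(p − n·s(p,h))`, `s(p, 0) = 0`, with `f` Lipschitz. -/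
theorem stmt_9 (f : ℝ → ℝ) (K : NNReal) (hf : LipschitzWith K f) (n : ℝ)
    (s : ℝ → ℝ → ℝ)
    (hs0 : ∀ p : ℝ, s p 0 = 0)
    (hderiv : ∀ (p : ℝ) (h : ℝ), 0 ≤ h →
      HasDerivWithinAt (s p) (f (p - n * s p h)) (Set.Ici 0) h) :
    ∀ (p a b : ℝ), 0 ≤ a → 0 ≤ b →
      s p (a + b) = s p a + s (p - n * s p a) b := by
  intro p a b ha hb
  -- the autonomous vector field
  set v : ℝ → ℝ → ℝ := fun _ x => f (p - n * x) with hv_def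
  have hv : ∀ t, LipschitzWith (K * ‖n‖₊) (v t) := by
    intro t
    apply LipschitzWith.of_dist_le_mul
    intro x y
    calc dist (f (p - n * x)) (f (p - n * y)) ≤ K * dist (p - n * x) (p - n * y) :=
          hf.dist_le_mul _ _
      _ = ↑(K * ‖n‖₊) * dist x y := by
          rw [Real.dist_eq, Real.dist_eq]
          have : p - n * x - (p - n * y) = n * (y - x) := by ring
          rw [this, abs_mul, abs_sub_comm x y]
          push_cast
          rw [Real.norm_eq_abs]
          ring
  -- continuity of s q on Ici 0
  have hcont : ∀ q : ℝ, ContinuousOn (s q) (Set.Ici 0) := fun q t ht =>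
    (hderiv q t ht).continuousWithinAt
  set g₁ : ℝ → ℝ := fun t => s p (a + t) with hg1
  set g₂ : ℝ → ℝ := fun t => s p a + s (p - n * s p a) t with hg2
  have hg₁c : ContinuousOn g₁ (Set.Icc 0 b) := by
    apply (hcont p).comp (continuous_const.add continuous_id).continuousOn
    intro t ht
    exact add_nonneg ha ht.1
  have hg₂c : ContinuousOn g₂ (Set.Icc 0 b) := by
    exact continuousOn_const.add ((hcont _).mono (fun t ht => ht.1))
  have hg₁' : ∀ t ∈ Set.Ico (0:ℝ) b, HasDerivWithinAt g₁ (v t (g₁ t)) (Set.Ici t) t := by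
    intro t ht
    have h1 : HasDerivWithinAt (s p) (f (p - n * s p (a + t))) (Set.Ici (a + t)) (a + t) :=
      (hderiv p (a + t) (add_nonneg ha ht.1)).mono
        (Set.Ici_subset_Ici.mpr (add_nonneg ha ht.1))
    have h2 : HasDerivWithinAt (fun t : ℝ => a + t) 1 (Set.Ici t) t :=
      ((hasDerivAt_id t).const_add a).hasDerivWithinAt
    have := h1.comp t h2 (fun x hx => by simpa using add_le_add_left hx a)
    simpa [v, g₁, Function.comp_def] using this
  have hg₂' : ∀ t ∈ Set.Ico (0:ℝ) b, HasDerivWithinAt g₂ (v t (g₂ t)) (Set.Ici t) t := by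
    intro t ht
    have h1 : HasDerivWithinAt (s (p - n * s p a))
        (f (p - n * s p a - n * s (p - n * s p a) t)) (Set.Ici t) t :=
      ((hderiv (p - n * s p a) t ht.1).mono (Set.Ici_subset_Ici.mpr ht.1))
    have := h1.const_add (s p a)
    have heq : p - n * s p a - n * s (p - n * s p a) t
        = p - n * (s p a + s (p - n * s p a) t) := by ring
    rw [heq] at this
    simpa [v, g₂] using this
  have h0 : g₁ 0 = g₂ 0 := by simp [g₁, g₂, hs0]
  have := ODE_solution_unique hv hg₁c hg₁' hg₂c hg₂' h0
    (Set.right_mem_Icc.mpr hb)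
  simpa [g₁, g₂] using this
end

section
/- Let E be a real inner product space, x ∈ E nonzero, w ∈ E, y ∈ ℝ, η > 0, h ≥ 0, and set p = ⟨w, x⟩, n = ⟨x, x⟩ > 0. Let w' = w − s(h)·x where s(h) = ((p − y)/n)·(1 − exp(−h·η·n)). Then ⟨w', x⟩ − y = exp(−h·η·n)·(⟨w, x⟩ − y). In particular, if ⟨w, x⟩ − y ≠ 0 then (⟨w', x⟩ − y)/(⟨w, x⟩ − y) = exp(−h·η·n) > 0, so the importance-invariant squared-loss update is safe: the residual never changes sign, for any learning rate and importance weight. -/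
open RealInnerProductSpace

/-- Safety of the importance-invariant squared-loss update: the residual shrinks by the
positive factor `exp(−hηn)`, hence it never changes sign. -/
theorem stmt_10 {E : Type*} [NormedAddCommGroup E] [InnerProductSpace ℝ E]
    (x w : E) (hx : x ≠ 0) (y η h : ℝ) (hη : 0 < η) (hh : 0 ≤ h)
    (p n : ℝ) (hp : p = ⟪w, x⟫) (hn : n = ⟪x, x⟫)
    (w' : E)
    (hw' : w' = w - (((p - y) / n) * (1 - Real.exp (-(h * η * n)))) • x) :
    ⟪w', x⟫ - y = Real.exp (-(h * η * n)) * (⟪w, x⟫ - y) ∧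
    (⟪w, x⟫ - y ≠ 0 →
      (⟪w', x⟫ - y) / (⟪w, x⟫ - y) = Real.exp (-(h * η * n)) ∧
        0 < Real.exp (-(h * η * n))) := by
  have hn0 : n ≠ 0 := by
    rw [hn, real_inner_self_eq_norm_sq]
    have : ‖x‖ ≠ 0 := norm_ne_zero_iff.2 hx
    positivity
  have key : ⟪w', x⟫ - y = Real.exp (-(h * η * n)) * (⟪w, x⟫ - y) := by
    rw [hw', inner_sub_left, real_inner_smul_left, ← hp, ← hn]
    field_simp
    ring
  refine ⟨key, fun hne => ⟨?_, Real.exp_pos _⟩⟩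
  rw [key, mul_div_assoc, div_self hne, mul_one]
end

section
/- Let E be a real inner product space, x ∈ E nonzero, w ∈ E, y ∈ {−1, 1}, η > 0, h ≥ 0, and set p = ⟨w, x⟩, n = ⟨x, x⟩ > 0. Suppose y·p ≤ 1. Let w' = w − s(h)·x where s(h) = −y·min(h·η, (1 − y·p)/n). Then y·⟨w', x⟩ ≤ 1, i.e., the importance-invariant hinge-loss update never overshoots the hinge, for any learning rate and importance weight. -/
open RealInnerProductSpace

/-- Safety of the importance-invariant hinge-loss update: the margin never exceeds `1`
after the update, for any learning rate and importance weight. -/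
theorem stmt_11 {E : Type*} [NormedAddCommGroup E] [InnerProductSpace ℝ E]
    (x w : E) (hx : x ≠ 0) (y η h : ℝ) (hy : y = -1 ∨ y = 1)
    (hη : 0 < η) (hh : 0 ≤ h)
    (p n : ℝ) (hp : p = ⟪w, x⟫) (hn : n = ⟪x, x⟫)
    (hyp : y * p ≤ 1)
    (w' : E)
    (hw' : w' = w - (-y * min (h * η) ((1 - y * p) / n)) • x) :
    y * ⟪w', x⟫ ≤ 1 := by
  have hn0 : 0 < n := by
    rw [hn, real_inner_self_eq_norm_sq]; have := norm_pos_iff.mpr hx; positivity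
  have hy2 : y * y = 1 := by rcases hy with h1 | h1 <;> simp [h1]
  have hmin : min (h * η) ((1 - y * p) / n) ≤ (1 - y * p) / n := min_le_right _ _
  have key : min (h * η) ((1 - y * p) / n) * n ≤ 1 - y * p := by
    calc min (h * η) ((1 - y * p) / n) * n ≤ ((1 - y * p) / n) * n :=
          mul_le_mul_of_nonneg_right hmin hn0.le
      _ = 1 - y * p := div_mul_cancel₀ _ hn0.ne'
  rw [hw', inner_sub_left, real_inner_smul_left, ← hp, ← hn]
  nlinarith [key, hy2]
end

section
/- Let E be a real inner product space, x ∈ E nonzero, w_t ∈ E, y ∈ ℝ, λ > 0, τ ∈ (0, 1), and set n = ⟨x, x⟩ > 0 and p = ⟨w_t, x⟩. Define the quantile loss ℓ_τ(q, y) = τ·(y − q) if y > q and (1 − τ)·(q − y) if y ≤ q. Then the function F(w) = (1/2)‖w − w_t‖² + λ·ℓ_τ(⟨w, x⟩, y) attains its global minimum over E at: w_t − λ·(1 − τ)·x if (p − y)/((1 − τ)·n) > λ; w_t + λ·τ·x if (y − p)/(τ·n) > λ; and w_t − ((p − y)/n)·x otherwise. -/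
open RealInnerProductSpace

lemma quantile_scalar (y lam τ n p s0 : ℝ) (hn : 0 < n) (hτ0 : 0 < τ) (hτ1 : τ < 1)
    (hlam : 0 < lam)
    (ℓτ : ℝ → ℝ)
    (hℓ : ∀ q : ℝ, ℓτ q = if y > q then τ * (y - q) else (1 - τ) * (q - y))
    (hcase : (lam * ((1 - τ) * n) < p - y ∧ s0 = p - lam * (1 - τ) * n) ∨
             (lam * (τ * n) < y - p ∧ s0 = p + lam * τ * n) ∨
             (p - y ≤ lam * ((1 - τ) * n) ∧ y - p ≤ lam * (τ * n) ∧ s0 = y)) :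
    ∀ s : ℝ, (s0 - p) ^ 2 / (2 * n) + lam * ℓτ s0 ≤ (s - p) ^ 2 / (2 * n) + lam * ℓτ s := by
  intro s
  have h2n : (0:ℝ) < 2 * n := by linarith
  have key : ∀ a b c d : ℝ, a / (2*n) + b - (c / (2*n) + d) = (a - c + 2*n*(b - d)) / (2*n) :=
    fun a b c d => by field_simp; ring
  rw [hℓ s0, hℓ s, ← sub_nonneg]
  rcases hcase with ⟨hc, hs0⟩ | ⟨hc, hs0⟩ | ⟨hc1, hc2, hs0⟩ <;> subst hs0 <;>
      split_ifs with h1 h2 <;> (try (exfalso; nlinarith)) <;>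
      rw [key] <;> apply div_nonneg _ (le_of_lt h2n)
  · nlinarith [sq_nonneg (s - p + lam*(1-τ)*n), mul_pos (mul_pos h2n hlam) (sub_pos.mpr h1)]
  · nlinarith [sq_nonneg (s - p + lam*(1-τ)*n)]
  · nlinarith [sq_nonneg (s - p - lam*τ*n)]
  · nlinarith [sq_nonneg (s - p - lam*τ*n),
      mul_nonneg (mul_nonneg h2n.le hlam.le) (sub_nonneg.mpr (not_lt.mp h1))]
  · nlinarith [mul_nonneg (sub_pos.mpr h1).le (sub_nonneg.mpr hc2), sq_nonneg (s - p)]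
  · nlinarith [mul_nonneg (sub_nonneg.mpr (not_lt.mp h1)) (sub_nonneg.mpr hc1), sq_nonneg (s - p)]

/-- Closed form of the implicit (proximal) update for the τ-quantile loss: depending on how
far the prediction is from the label, the minimizer of
`F(w) = ½‖w − wₜ‖² + λ·ℓ_τ(⟪w,x⟫, y)` is one of three explicit points. -/
theorem stmt_17 {E : Type*} [NormedAddCommGroup E] [InnerProductSpace ℝ E]
    (x wt : E) (hx : x ≠ 0) (y lam τ : ℝ) (hlam : 0 < lam)
    (hτ : τ ∈ Set.Ioo (0 : ℝ) 1)
    (n p : ℝ) (hn : n = ⟪x, x⟫) (hp : p = ⟪wt, x⟫)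
    (ℓτ : ℝ → ℝ)
    (hℓ : ∀ q : ℝ, ℓτ q = if y > q then τ * (y - q) else (1 - τ) * (q - y))
    (F : E → ℝ)
    (hF : ∀ w : E, F w = (1 / 2) * ‖w - wt‖ ^ 2 + lam * ℓτ ⟪w, x⟫) :
    ((p - y) / ((1 - τ) * n) > lam →
      ∀ w : E, F (wt - (lam * (1 - τ)) • x) ≤ F w) ∧
    ((y - p) / (τ * n) > lam →
      ∀ w : E, F (wt + (lam * τ) • x) ≤ F w) ∧
    (¬ ((p - y) / ((1 - τ) * n) > lam) → ¬ ((y - p) / (τ * n) > lam) →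
      ∀ w : E, F (wt - ((p - y) / n) • x) ≤ F w) := by
  obtain ⟨hτ0, hτ1⟩ := hτ
  have hxn : ‖x‖ ^ 2 = n := by rw [hn, real_inner_self_eq_norm_sq]
  have hn0 : 0 < n := hxn ▸ pow_pos (norm_pos_iff.mpr hx) 2
  have hτn : 0 < (1 - τ) * n := mul_pos (by linarith) hn0
  have hτn' : 0 < τ * n := mul_pos hτ0 hn0
  -- F at points of the form wt + c • x
  have hFc : ∀ c : ℝ, F (wt + c • x) = (p + c * n - p) ^ 2 / (2 * n) + lam * ℓτ (p + c * n) := by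
    intro c
    have hip : ⟪wt + c • x, x⟫ = p + c * n := by
      rw [inner_add_left, real_inner_smul_left, hp, hn]
    rw [hF, hip]
    congr 1
    rw [add_sub_cancel_left, norm_smul, mul_pow, Real.norm_eq_abs, sq_abs, hxn]
    field_simp
    ring
  -- lower bound via Cauchy–Schwarz
  have lower : ∀ w : E, (⟪w, x⟫ - p) ^ 2 / (2 * n) + lam * ℓτ ⟪w, x⟫ ≤ F w := by
    intro w
    rw [hF]
    have h1 : ⟪w - wt, x⟫ = ⟪w, x⟫ - p := by rw [inner_sub_left, hp]
    have hcs : (⟪w, x⟫ - p) ^ 2 ≤ ‖w - wt‖ ^ 2 * n := by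
      calc (⟪w, x⟫ - p) ^ 2 = |⟪w - wt, x⟫| ^ 2 := by rw [h1, sq_abs]
        _ ≤ (‖w - wt‖ * ‖x‖) ^ 2 := by
            apply pow_le_pow_left₀ (abs_nonneg _) (abs_real_inner_le_norm _ _)
        _ = ‖w - wt‖ ^ 2 * n := by rw [mul_pow, hxn]
    have : (⟪w, x⟫ - p) ^ 2 / (2 * n) ≤ (1 / 2) * ‖w - wt‖ ^ 2 := by
      rw [div_le_iff₀ (by linarith)]
      nlinarith
    linarith
  have main : ∀ (c s0 : ℝ), s0 = p + c * n →
      ((lam * ((1 - τ) * n) < p - y ∧ s0 = p - lam * (1 - τ) * n) ∨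
       (lam * (τ * n) < y - p ∧ s0 = p + lam * τ * n) ∨
       (p - y ≤ lam * ((1 - τ) * n) ∧ y - p ≤ lam * (τ * n) ∧ s0 = y)) →
      ∀ w : E, F (wt + c • x) ≤ F w := by
    intro c s0 hs0 hc w
    have := quantile_scalar y lam τ n p s0 hn0 hτ0 hτ1 hlam ℓτ hℓ hc ⟪w, x⟫
    calc F (wt + c • x) = (s0 - p) ^ 2 / (2 * n) + lam * ℓτ s0 := by rw [hFc, hs0]
      _ ≤ (⟪w, x⟫ - p) ^ 2 / (2 * n) + lam * ℓτ ⟪w, x⟫ := this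
      _ ≤ F w := lower w
  refine ⟨fun hgt w => ?_, fun hgt w => ?_, fun hng1 hng2 w => ?_⟩
  · rw [sub_eq_add_neg, ← neg_smul]
    exact main _ (p - lam * (1 - τ) * n) (by ring)
      (Or.inl ⟨(lt_div_iff₀ hτn).mp hgt, rfl⟩) w
  · exact main _ (p + lam * τ * n) (by ring)
      (Or.inr (Or.inl ⟨(lt_div_iff₀ hτn').mp hgt, rfl⟩)) w
  · rw [sub_eq_add_neg, ← neg_smul]
    refine main _ y (by field_simp; ring) (Or.inr (Or.inr ⟨?_, ?_, rfl⟩)) w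
    · exact (div_le_iff₀ hτn).mp (not_lt.mp hng1)
    · exact (div_le_iff₀ hτn').mp (not_lt.mp hng2)
end

section
/- Let E be a real inner product space, x ∈ E nonzero, w_t ∈ E, y ∈ {−1, 1}, λ > 0, and set n = ⟨x, x⟩ > 0 and p = ⟨w_t, x⟩. Suppose y·p ≤ 1. Then the function F(w) = (1/2)‖w − w_t‖² + λ·max(0, 1 − y·⟨w, x⟩) attains its global minimum over E at w* = w_t + y·min(λ, (1 − y·p)/n)·x. -/
open RealInnerProductSpace

/-- Closed form of the implicit (proximal) update for the hinge loss (the PA-I update):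
`F(w) = ½‖w − wₜ‖² + λ·max(0, 1 − y⟪w,x⟫)` attains its global minimum at
`wₜ + y·min(λ, (1 − yp)/n) • x`. -/
theorem stmt_18 {E : Type*} [NormedAddCommGroup E] [InnerProductSpace ℝ E]
    (x wt : E) (hx : x ≠ 0) (y lam : ℝ) (hy : y = -1 ∨ y = 1) (hlam : 0 < lam)
    (n p : ℝ) (hn : n = ⟪x, x⟫) (hp : p = ⟪wt, x⟫)
    (hyp : y * p ≤ 1)
    (F : E → ℝ)
    (hF : ∀ w : E, F w = (1 / 2) * ‖w - wt‖ ^ 2 + lam * max 0 (1 - y * ⟪w, x⟫)) :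
    ∀ w : E, F (wt + (y * min lam ((1 - y * p) / n)) • x) ≤ F w := by
  have hn0 : 0 < n := by
    rw [hn, real_inner_self_eq_norm_sq]
    exact pow_pos (norm_pos_iff.mpr hx) 2
  have hy2 : y * y = 1 := by rcases hy with h | h <;> simp [h]
  have h1 : 0 ≤ 1 - y * p := by linarith
  set t : ℝ := min lam ((1 - y * p) / n) with ht
  have ht0 : 0 ≤ t := le_min hlam.le (div_nonneg h1 hn0.le)
  have htlam : t ≤ lam := min_le_left _ _
  have hxn : (‖x‖ : ℝ) ^ 2 = n := by rw [hn, real_inner_self_eq_norm_sq]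
  have h3 : ‖(y * t) • x‖ ^ 2 = t ^ 2 * n := by
    rw [norm_smul, mul_pow, Real.norm_eq_abs, sq_abs, hxn,
      show (y * t) ^ 2 = y * y * t ^ 2 by ring, hy2, one_mul]
  have hmin : F (wt + (y * t) • x) = t * (1 - y * p) - (1/2) * t ^ 2 * n := by
    rw [hF]
    have h2 : wt + (y * t) • x - wt = (y * t) • x := by abel
    have h4 : ⟪wt + (y * t) • x, x⟫ = p + y * t * n := by
      rw [inner_add_left, real_inner_smul_left, hp, hn]
    rw [h2, h3, h4]
    have h5 : 1 - y * (p + y * t * n) = (1 - y * p) - t * n := by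
      rw [show y * (p + y * t * n) = y * p + y * y * (t * n) by ring, hy2]; ring
    rw [h5]
    rcases le_or_gt ((1 - y * p) / n) lam with hc | hc
    · have htv : t = (1 - y * p) / n := min_eq_right hc
      have hz : (1 - y * p) - t * n = 0 := by
        rw [htv]; field_simp; ring
      rw [hz, max_self, htv]
      field_simp; ring
    · have htv : t = lam := min_eq_left hc.le
      have hsnn : (0:ℝ) ≤ (1 - y * p) - t * n := by
        rw [htv]
        have := (lt_div_iff₀ hn0).mp hc
        nlinarith
      rw [max_eq_right hsnn, htv]; ring
  intro w
  rw [hmin, hF]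
  have hmax : t * (1 - y * ⟪w, x⟫) ≤ lam * max 0 (1 - y * ⟪w, x⟫) :=
    le_trans (mul_le_mul_of_nonneg_left (le_max_right _ _) ht0)
      (mul_le_mul_of_nonneg_right htlam (le_max_left _ _))
  have hsq : 0 ≤ ‖w - wt - (y * t) • x‖ ^ 2 := sq_nonneg _
  have hexp : ‖w - wt - (y * t) • x‖ ^ 2
      = ‖w - wt‖ ^ 2 - 2 * (y * t * (⟪w, x⟫ - p)) + t ^ 2 * n := by
    rw [norm_sub_sq_real, real_inner_smul_right, inner_sub_left, hp, h3]
  nlinarith [hmax, hsq, hexp, hy2]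
end

section
/- Let p ∈ ℝ, n > 0, η > 0, H > 0, and let g : ℝ → ℝ be continuous. Suppose s : [0, H] → ℝ is differentiable with s(0) = 0 and s'(h) = η·g(p − s(h)·n) for all h ∈ [0, H], and suppose g(p − u·n) > 0 for all u in the interval between 0 and s(H). Then for every h ∈ [0, H]: h = (1/η)·∫_0^{s(h)} du / g(p − u·n). -/
open Set Filter

/-- If `f` has positive derivative `d` within `S` at `t`, and `u ⊆ S \ {t}` with `t` in
the closure of `u`, then some point of `u` has positive slope with `t`. -/
lemma aux_slope_19 {f : ℝ → ℝ} {S u : Set ℝ} {t d : ℝ}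
    (hf : HasDerivWithinAt f d S t) (hd : 0 < d) (hu : u ⊆ S \ {t})
    (hne : (nhdsWithin t u).NeBot) :
    ∃ x ∈ u, 0 < (f x - f t) / (x - t) := by
  have h1 := hasDerivWithinAt_iff_tendsto_slope.mp hf
  have h2 : Tendsto (slope f t) (nhdsWithin t u) (nhds d) :=
    h1.mono_left (nhdsWithin_mono t hu)
  have h3 : ∀ᶠ x in nhdsWithin t u, 0 < slope f t x := h2.eventually (eventually_gt_nhds hd)
  have h4 : ∀ᶠ x in nhdsWithin t u, x ∈ u := eventually_mem_nhdsWithin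
  obtain ⟨x, hx1, hx2⟩ := (h3.and h4).exists
  exact ⟨x, hx2, by simpa [slope_def_field] using hx1⟩

/-- Separation of variables for the importance-invariant ODE: the importance weight `h` is
recovered from the scaling `s(h)` by the integral formula
`h = (1/η) ∫₀^{s(h)} du / g(p − u·n)`, provided `g` is positive along the path. -/
theorem stmt_19 (p n η H : ℝ) (hn : 0 < n) (hη : 0 < η) (hH : 0 < H)
    (g : ℝ → ℝ) (hg : Continuous g)
    (s : ℝ → ℝ) (hs0 : s 0 = 0)
    (hderiv : ∀ h ∈ Set.Icc (0 : ℝ) H,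
      HasDerivWithinAt s (η * g (p - s h * n)) (Set.Icc (0 : ℝ) H) h)
    (hpos : ∀ u ∈ Set.uIcc (0 : ℝ) (s H), 0 < g (p - u * n)) :
    ∀ h ∈ Set.Icc (0 : ℝ) H,
      h = (1 / η) * ∫ u in (0 : ℝ)..(s h), 1 / g (p - u * n) := by
  have hscont : ContinuousOn s (Icc (0 : ℝ) H) := fun h hh =>
    (hderiv h hh).continuousWithinAt
  have hHmem : (0 : ℝ) ∈ Icc (0 : ℝ) H := ⟨le_refl 0, hH.le⟩
  have hHmem' : H ∈ Icc (0 : ℝ) H := ⟨hH.le, le_refl H⟩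
  have hgp : 0 < g (p - 0 * n) := hpos 0 left_mem_uIcc
  -- Step 1: 0 ≤ s h for all h ∈ [0, H]
  have step1 : ∀ h ∈ Icc (0 : ℝ) H, 0 ≤ s h := by
    intro h₀ hh₀
    by_contra hneg
    push_neg at hneg
    set Z : Set ℝ := Icc (0 : ℝ) h₀ ∩ s ⁻¹' {0} with hZ
    have hZclosed : IsClosed Z :=
      (hscont.mono (Icc_subset_Icc le_rfl hh₀.2)).preimage_isClosed_of_isClosed
        isClosed_Icc isClosed_singleton
    have hZne : Z.Nonempty := ⟨0, ⟨le_refl 0, hh₀.1⟩, hs0⟩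
    have hZbdd : BddAbove Z := ⟨h₀, fun x hx => hx.1.2⟩
    set t := sSup Z with ht
    have htZ : t ∈ Z := hZclosed.csSup_mem hZne hZbdd
    have hst : s t = 0 := htZ.2
    have htmem : t ∈ Icc (0 : ℝ) H := ⟨htZ.1.1, htZ.1.2.trans hh₀.2⟩
    have htlt : t < h₀ := lt_of_le_of_ne htZ.1.2 (by
      intro h
      rw [h] at hst
      exact absurd hst (by linarith))
    -- derivative at t is positive
    have hdpos : 0 < η * g (p - s t * n) := by
      rw [hst]; exact mul_pos hη hgp
    have hsub : Ioc t h₀ ⊆ Icc (0 : ℝ) H \ {t} := by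
      intro x hx
      exact ⟨⟨htmem.1.trans hx.1.le, hx.2.trans hh₀.2⟩, fun hxt => absurd (hxt ▸ hx.1) (lt_irrefl x)⟩
    have hne : (nhdsWithin t (Ioc t h₀)).NeBot := by
      rw [← mem_closure_iff_nhdsWithin_neBot, closure_Ioc htlt.ne]
      exact ⟨le_rfl, htlt.le⟩
    obtain ⟨x, hxmem, hxslope⟩ := aux_slope_19 (hderiv t htmem) hdpos hsub hne
    have hxt : t < x := hxmem.1
    have hsx : 0 < s x := by
      rw [hst, sub_zero] at hxslope
      have := div_pos_iff.mp hxslope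
      rcases this with ⟨h1, _⟩ | ⟨_, h2⟩
      · exact h1
      · linarith
    -- IVT: there is a zero of s in [x, h₀], contradicting sSup
    have hxH : x ∈ Icc (0 : ℝ) H := ⟨htmem.1.trans hxt.le, hxmem.2.trans hh₀.2⟩
    have hivt := intermediate_value_Icc' hxmem.2
      (hscont.mono (Icc_subset_Icc hxH.1 hh₀.2))
    have h0mem : (0 : ℝ) ∈ Icc (s h₀) (s x) := ⟨hneg.le, hsx.le⟩
    obtain ⟨c, hcmem, hsc⟩ := hivt h0mem
    have hcZ : c ∈ Z := ⟨⟨hxH.1.trans hcmem.1, hcmem.2⟩, hsc⟩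
    have : c ≤ t := le_csSup hZbdd hcZ
    linarith [hxt.trans_le hcmem.1]
  have hM : 0 ≤ s H := step1 H hHmem'
  have huIcc : uIcc (0 : ℝ) (s H) = Icc 0 (s H) := uIcc_of_le hM
  -- Step 2: s h ≤ s H for all h ∈ [0, H]
  have step2 : ∀ h ∈ Icc (0 : ℝ) H, s h ≤ s H := by
    intro h₀ hh₀
    by_contra hgt
    push_neg at hgt
    set M := s H with hMdef
    set Z : Set ℝ := Icc h₀ H ∩ s ⁻¹' {M} with hZ
    have hZclosed : IsClosed Z :=
      (hscont.mono (Icc_subset_Icc hh₀.1 le_rfl)).preimage_isClosed_of_isClosed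
        isClosed_Icc isClosed_singleton
    have hZne : Z.Nonempty := ⟨H, ⟨hh₀.2, le_refl H⟩, rfl⟩
    have hZbdd : BddBelow Z := ⟨h₀, fun x hx => hx.1.1⟩
    set t := sInf Z with ht
    have htZ : t ∈ Z := hZclosed.csInf_mem hZne hZbdd
    have hst : s t = M := htZ.2
    have htmem : t ∈ Icc (0 : ℝ) H := ⟨hh₀.1.trans htZ.1.1, htZ.1.2⟩
    have htgt : h₀ < t := lt_of_le_of_ne htZ.1.1 (by
      intro h
      rw [← h] at hst
      exact absurd hst (by linarith))
    have hdpos : 0 < η * g (p - s t * n) := by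
      rw [hst]
      exact mul_pos hη (hpos M (huIcc ▸ ⟨hM, le_refl M⟩))
    have hsub : Ico h₀ t ⊆ Icc (0 : ℝ) H \ {t} := by
      intro x hx
      exact ⟨⟨hh₀.1.trans hx.1, hx.2.le.trans htmem.2⟩,
        fun hxt => absurd (hxt ▸ hx.2) (lt_irrefl x)⟩
    have hne : (nhdsWithin t (Ico h₀ t)).NeBot := by
      rw [← mem_closure_iff_nhdsWithin_neBot, closure_Ico htgt.ne]
      exact ⟨htgt.le, le_rfl⟩
    obtain ⟨x, hxmem, hxslope⟩ := aux_slope_19 (hderiv t htmem) hdpos hsub hne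
    have hxt : x < t := hxmem.2
    have hsx : s x < M := by
      rw [hst] at hxslope
      rcases div_pos_iff.mp hxslope with ⟨_, h2⟩ | ⟨h1, _⟩
      · linarith
      · linarith
    -- IVT on [h₀, x]: s h₀ > M > s x gives a point of Z below t
    have hxH : x ∈ Icc (0 : ℝ) H := ⟨hh₀.1.trans hxmem.1, hxt.le.trans htmem.2⟩
    have hivt := intermediate_value_Icc' hxmem.1
      (hscont.mono (Icc_subset_Icc hh₀.1 hxH.2))
    have hMmem : M ∈ Icc (s x) (s h₀) := ⟨hsx.le, hgt.le⟩
    obtain ⟨c, hcmem, hsc⟩ := hivt hMmem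
    have hcZ : c ∈ Z := ⟨⟨hcmem.1, (hcmem.2.trans hxt.le).trans htmem.2⟩, hsc⟩
    have : t ≤ c := csInf_le hZbdd hcZ
    linarith [hcmem.2.trans_lt hxt]
  -- so s h ∈ Icc 0 (s H) for h ∈ [0, H]
  have hrange : ∀ h ∈ Icc (0 : ℝ) H, s h ∈ Icc (0 : ℝ) (s H) := fun h hh =>
    ⟨step1 h hh, step2 h hh⟩
  -- positivity along the path, restated
  have hpos' : ∀ u ∈ Icc (0 : ℝ) (s H), 0 < g (p - u * n) := fun u hu =>
    hpos u (huIcc ▸ hu)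
  -- the integrand
  set f : ℝ → ℝ := fun u => 1 / g (p - u * n) with hf
  have hcontg : Continuous fun u : ℝ => g (p - u * n) := by
    exact hg.comp (by continuity)
  -- FTC: derivative of G at points of Icc 0 (s H)
  have hG : ∀ x ∈ Icc (0 : ℝ) (s H),
      HasDerivAt (fun y => ∫ u in (0 : ℝ)..y, f u) (f x) x := by
    intro x hx
    have hgx : g (p - x * n) ≠ 0 := (hpos' x hx).ne'
    have hint : IntervalIntegrable f MeasureTheory.volume 0 x := by
      apply ContinuousOn.intervalIntegrable
      apply ContinuousOn.div continuousOn_const hcontg.continuousOn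
      intro u hu
      have : u ∈ Icc (0 : ℝ) (s H) := by
        rw [uIcc_of_le hx.1] at hu
        exact ⟨hu.1, hu.2.trans hx.2⟩
      exact (hpos' u this).ne'
    have hopen : IsOpen {u : ℝ | g (p - u * n) ≠ 0} :=
      isOpen_ne.preimage hcontg
    have hmeas : StronglyMeasurableAtFilter f (nhds x) MeasureTheory.volume := by
      refine ContinuousOn.stronglyMeasurableAtFilter hopen ?_ x hgx
      exact ContinuousOn.div continuousOn_const hcontg.continuousOn fun u hu => hu
    have hca : ContinuousAt f x :=
      ContinuousAt.div continuousAt_const hcontg.continuousAt hgx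
    exact intervalIntegral.integral_hasDerivAt_right hint hmeas hca
  -- φ h := G (s h) - η * h has derivative zero on [0, H]
  set φ : ℝ → ℝ := fun h => (∫ u in (0 : ℝ)..(s h), f u) - η * h with hφ
  have hφderiv : ∀ h ∈ Icc (0 : ℝ) H, HasDerivWithinAt φ 0 (Icc (0 : ℝ) H) h := by
    intro h hh
    have h1 : HasDerivWithinAt (fun h => ∫ u in (0 : ℝ)..(s h), f u)
        (f (s h) * (η * g (p - s h * n))) (Icc (0 : ℝ) H) h :=
      (hG (s h) (hrange h hh)).comp_hasDerivWithinAt h (hderiv h hh)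
    have h2 : HasDerivWithinAt (fun h : ℝ => η * h) η (Icc (0 : ℝ) H) h := by
      simpa using (hasDerivWithinAt_id h (Icc (0 : ℝ) H)).const_mul η
    have h3 := h1.sub h2
    have hval : f (s h) * (η * g (p - s h * n)) - η = 0 := by
      have hgne : g (p - s h * n) ≠ 0 := (hpos' (s h) (hrange h hh)).ne'
      simp only [hf]
      field_simp
      ring
    rwa [hval] at h3
  have hφcont : ContinuousOn φ (Icc (0 : ℝ) H) := fun h hh =>
    (hφderiv h hh).continuousWithinAt
  have hφconst : ∀ h ∈ Icc (0 : ℝ) H, φ h = φ 0 := by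
    apply constant_of_has_deriv_right_zero hφcont
    intro x hx
    exact (hφderiv x ⟨hx.1, hx.2.le⟩).mono_of_mem_nhdsWithin (Icc_mem_nhdsGE_of_mem hx)
  intro h hh
  have := hφconst h hh
  simp only [hφ, hs0, intervalIntegral.integral_same, mul_zero, sub_zero] at this
  have hGh : (∫ u in (0 : ℝ)..(s h), f u) = η * h := by linarith
  rw [hf] at hGh
  rw [hGh]
  field_simp
end
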